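/- arXiv:1206.4355 — 2 statements merged into one kernel-verified Lean document; each statement's English description precedes it below -/
import Mathlib

section
/- Let p be a prime, let m be a p-practical number, and let q be a prime with gcd(q, m) = 1. If ℓ_p*(q) ≤ m + 1, then n = mq is p-practical. Moreover, if k ≥ 2 and ℓ_p*(q) ≤ m, then n = m·q^k is p-practical. -/
open scoped Classical

/-- `n` is φ-practical: `X^n - 1` has a divisor in `ℤ[X]` of every degree `1 ≤ m ≤ n`. -/
def PhiPractical (n : ℕ) : Prop :=
  ∀ m : ℕ, 1 ≤ m → m ≤ n →
    ∃ g : Polynomial ℤ, g ∣ (Polynomial.X ^ n - 1) ∧ g.natDegree = m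

/-- `n` is p-practical: `X^n - 1` has a divisor in `𝔽_p[X]` of every degree `1 ≤ m ≤ n`. -/
def PPractical (p n : ℕ) : Prop :=
  ∀ m : ℕ, 1 ≤ m → m ≤ n →
    ∃ g : Polynomial (ZMod p), g ∣ (Polynomial.X ^ n - 1) ∧ g.natDegree = m

/-- `n` is λ-practical: `n` is p-practical for every prime `p`. -/
def LambdaPractical (n : ℕ) : Prop := ∀ p : ℕ, p.Prime → PPractical p n

/-- `ℓ_p*(d)`: the multiplicative order of `p` modulo the largest divisor of `d`
coprime to `p` (for `p` prime, this largest divisor is `ordCompl[p] d`). -/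
noncomputable def lstar (p d : ℕ) : ℕ := orderOf ((p : ZMod (ordCompl[p] d)))

/-- The Carmichael function `λ(d)`: the exponent of `(ℤ/dℤ)ˣ`. -/
noncomputable def carmichael (d : ℕ) : ℕ := Monoid.exponent (ZMod d)ˣ

/-- `n` is weakly φ-practical: writing `n = p₁^{e₁} ⋯ p_k^{e_k}` with `p₁ < ⋯ < p_k`,
each `p_{i+1} ≤ p₁^{e₁} ⋯ p_i^{e_i} + 2`; equivalently, every prime `q ∣ n` satisfies
`q ≤ (∏_{r ∣ n, r prime, r < q} r^{v_r(n)}) + 2`. -/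
def WeaklyPhiPractical (n : ℕ) : Prop :=
  0 < n ∧ ∀ q : ℕ, q.Prime → q ∣ n →
    q ≤ (∏ r ∈ n.primeFactors.filter (· < q), r ^ n.factorization r) + 2

open Polynomial Finset

lemma aux_sum_min (m : ℕ) : ∀ r u : ℕ, u ≤ r * m → ∑ i ∈ range r, min m (u - i * m) = u := by
  intro r
  induction r with
  | zero => intro u hu; simpa using (Nat.le_zero.mp (by simpa using hu)).symm
  | succ r ih =>
    intro u hu
    have hshift : ∀ i : ℕ, u - (i + 1) * m = (u - m) - i * m := by
      intro i
      rw [add_mul, one_mul, add_comm (i*m) m, Nat.sub_sub]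
    rw [Finset.sum_range_succ' (fun i => min m (u - i * m)) r]
    simp only [hshift, Nat.zero_mul, Nat.sub_zero]
    rcases le_or_gt u m with h | h
    · have h0 : u - m = 0 := by omega
      rw [h0]
      simp [Nat.zero_sub, min_eq_right h]
    · have h1 : u - m ≤ r * m := by
        rw [Nat.succ_mul] at hu; omega
    
      rw [ih (u - m) h1, min_eq_left h.le]
      omega

lemma aux_greedy (m q ℓ C : ℕ) (hq : 2 ≤ q) (hℓ : 1 ≤ ℓ) (hC : ℓ * C = (q - 1) * m) :
    ∀ k t : ℕ, t ≤ m * q ^ k → (ℓ ≤ m ∨ (k ≤ 1 ∧ ℓ ≤ m + 1)) →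
    ∃ (s₀ : ℕ) (u : ℕ → ℕ), s₀ ≤ m ∧ (∀ j, u j ≤ C) ∧
      t = s₀ + ∑ j ∈ range k, ℓ * q ^ j * u j := by
  intro k
  induction k with
  | zero =>
    intro t ht _
    exact ⟨t, fun _ => 0, by simpa using ht, fun _ => Nat.zero_le _, by simp⟩
  | succ k ih =>
    intro t ht hcase
    have hcase' : ℓ ≤ m ∨ (k ≤ 1 ∧ ℓ ≤ m + 1) := by
      rcases hcase with h | ⟨h, h'⟩
      · exact Or.inl h
      · exact Or.inr ⟨by omega, h'⟩
    have hqk : (1:ℕ) ≤ q ^ k := Nat.one_le_pow _ _ (by omega)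
    have key : ∀ (w : ℕ), w ≤ C → ℓ * q ^ k * w ≤ t → t - ℓ * q ^ k * w ≤ m * q ^ k →
        ∃ (s₀ : ℕ) (u : ℕ → ℕ), s₀ ≤ m ∧ (∀ j, u j ≤ C) ∧
          t = s₀ + ∑ j ∈ range (k+1), ℓ * q ^ j * u j := by
      intro w hwC hwle hrem
      obtain ⟨s₀, u, h1, h2, h3⟩ := ih (t - ℓ * q ^ k * w) hrem hcase'
      refine ⟨s₀, Function.update u k w, h1, ?_, ?_⟩
      · intro j; by_cases hj : j = k
        · subst hj; rw [Function.update_self]; exact hwC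
        · rw [Function.update_of_ne hj]; exact h2 j
      · rw [Finset.sum_range_succ, Function.update_self,
          Finset.sum_congr rfl (fun j hj => by
            rw [Function.update_of_ne (Nat.ne_of_lt (Finset.mem_range.mp hj))])]
        omega
    rcases le_or_gt t (m * q ^ k) with h | h
    · exact key 0 (Nat.zero_le _) (by simp) (by simpa using h)
    · have hBpos : 1 ≤ ℓ * q ^ k := by
        calc 1 = 1 * 1 := (one_mul 1).symm
        _ ≤ ℓ * q ^ k := Nat.mul_le_mul hℓ hqk
      rcases le_or_gt C (t / (ℓ * q ^ k)) with h1 | h1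
      · -- w = C
        have hmul : ℓ * q ^ k * C ≤ ℓ * q ^ k * (t / (ℓ * q ^ k)) := Nat.mul_le_mul_left _ h1
        have hdivle : ℓ * q ^ k * (t / (ℓ * q ^ k)) ≤ t := Nat.mul_div_le t _
        have hle : ℓ * q ^ k * C ≤ t := hmul.trans hdivle
        refine key C le_rfl hle ?_
        have hBC : ℓ * q ^ k * C = q * (m * q ^ k) - m * q ^ k := by
          have e1 : ℓ * q ^ k * C = (ℓ * C) * q ^ k := by ring
          rw [e1, hC, mul_assoc, Nat.sub_one_mul]
        have hqq : m * q ^ (k+1) = q * (m * q ^ k) := by rw [pow_succ]; ring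
        rw [hqq] at ht
        have hMle : m * q ^ k ≤ q * (m * q ^ k) := Nat.le_mul_of_pos_left _ (by omega)
        omega
      · -- w = t / B
        have e1 := Nat.div_add_mod t (ℓ * q ^ k)
        have e2 : t % (ℓ * q ^ k) < ℓ * q ^ k := Nat.mod_lt _ (by omega)
        refine key (t / (ℓ * q ^ k)) h1.le (Nat.mul_div_le t _) ?_
        rcases hcase with hc | ⟨hk1, hc⟩
        · have : ℓ * q ^ k ≤ m * q ^ k := Nat.mul_le_mul_right _ hc
          omega
        · have hk0 : k = 0 := by omega
          subst hk0
          simp only [pow_zero, mul_one] at e1 e2 ⊢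
          omega

section S2

open Polynomial Finset

variable {R : Type*} [CommRing R]

lemma aux_comp_dvd {a b r : R[X]} (h : a ∣ b) : a.comp r ∣ b.comp r := by
  obtain ⟨c, rfl⟩ := h
  exact ⟨c.comp r, by rw [mul_comp]⟩

lemma aux_prod_comp {ι : Type*} (s : Finset ι) (F : ι → R[X]) (r : R[X]) :
    (∏ i ∈ s, F i).comp r = ∏ i ∈ s, (F i).comp r := by
  classical
  induction s using Finset.induction with
  | empty => simp
  | @insert _ _ h ih => rw [Finset.prod_insert h, Finset.prod_insert h, mul_comp, ih]

lemma aux_geom_comp (q A : ℕ) :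
    (∑ i ∈ range q, (X : R[X]) ^ i).comp (X ^ A) = ∑ i ∈ range q, (X : R[X]) ^ (A * i) := by
  rw [Polynomial.comp_eq_aeval, map_sum]
  refine Finset.sum_congr rfl fun i _ => ?_
  rw [map_pow, Polynomial.aeval_X, ← pow_mul, mul_comm]

lemma aux_identity (q m : ℕ) :
    ∀ k : ℕ, (X : R[X]) ^ (m * q ^ k) - 1 =
      ((X : R[X]) ^ m - 1) * ∏ j ∈ range k, (∑ i ∈ range q, (X : R[X]) ^ i).comp (X ^ (m * q ^ j)) := by
  intro k
  induction k with
  | zero => simp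
  | succ k ih =>
    have e1 : (X : R[X]) ^ (m * q ^ (k+1)) - 1
        = ((X:R[X])^(m*q^k) - 1) * ∑ i ∈ range q, ((X:R[X])^(m*q^k))^i := by
      rw [mul_comm ((X:R[X])^(m*q^k) - 1) _, geom_sum_mul, ← pow_mul]
      congr 2
      rw [pow_succ, ← mul_assoc]
    rw [e1, ih, Finset.prod_range_succ, mul_assoc]
    congr 1
    rw [aux_geom_comp]
    congr 1
    refine Finset.sum_congr rfl fun i _ => ?_
    rw [← pow_mul]

lemma aux_prod_div_helper {F : Type*} [Field F] {ι : Type*} (s : Finset ι)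
    (P : ι → (Polynomial F)) (d : ι → ℕ) (hP : ∀ x ∈ s, P x ≠ 0)
    (h : ∀ x ∈ s, ∃ G, G ∣ P x ∧ G.natDegree = d x) :
    ∃ H : Polynomial F, H ∣ ∏ x ∈ s, P x ∧ H.natDegree = ∑ x ∈ s, d x := by
  classical
  induction s using Finset.induction with
  | empty => exact ⟨1, one_dvd _, natDegree_one⟩
  | @insert a s ha ih =>
    obtain ⟨G, hG1, hG2⟩ := h a (Finset.mem_insert_self a s)
    obtain ⟨H, hH1, hH2⟩ := ih (fun x hx => hP x (Finset.mem_insert_of_mem hx))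
      (fun x hx => h x (Finset.mem_insert_of_mem hx))
    refine ⟨G * H, ?_, ?_⟩
    · rw [Finset.prod_insert ha]; exact mul_dvd_mul hG1 hH1
    · rw [Finset.sum_insert ha, natDegree_mul ?_ ?_, hG2, hH2]
      · exact ne_zero_of_dvd_ne_zero (hP a (Finset.mem_insert_self a s)) hG1
      · refine ne_zero_of_dvd_ne_zero ?_ hH1
        rw [Finset.prod_ne_zero_iff]
        exact fun x hx => hP x (Finset.mem_insert_of_mem hx)

lemma aux_monic_dvd_eq {A B : R[X]} [IsDomain R] (hmA : A.Monic) (hmB : B.Monic)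
    (hdvd : A ∣ B) (hdeg : A.natDegree = B.natDegree) : A = B := by
  obtain ⟨c, rfl⟩ := hdvd
  have hc : c ≠ 0 := by
    rintro rfl
    simp only [mul_zero] at hmB
    exact (not_monic_zero hmB)
  have hdc : c.natDegree = 0 := by
    have := natDegree_mul hmA.ne_zero hc
    omega
  have hlc : c.leadingCoeff = 1 := by
    have := hmB.leadingCoeff
    rw [leadingCoeff_mul, hmA.leadingCoeff, one_mul] at this
    exact this
  have : c = 1 := by
    rw [eq_C_of_natDegree_eq_zero hdc] at hlc ⊢
    rw [leadingCoeff_C] at hlc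
    rw [hlc, map_one]
  rw [this, mul_one]
end S2

lemma aux_piece (p q : ℕ) [hp : Fact p.Prime] (hq : q.Prime) (hpq : p ≠ q)
    (f : Polynomial (ZMod p)) (hirr : Irreducible f) (hmon : f.Monic)
    (hfd : f ∣ ∑ i ∈ Finset.range q, (X : Polynomial (ZMod p)) ^ i) :
    f.natDegree = orderOf ((p : ZMod q)) ∧
    ∀ (m B s c : ℕ), 1 ≤ m → 1 ≤ B → m * c ≡ 1 [MOD q] →
      ∀ g : Polynomial (ZMod p), g ∣ X ^ m - 1 → g.natDegree = s →
      ∃ G : Polynomial (ZMod p), G ∣ f.comp (X ^ (m * B)) ∧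
        G.natDegree = f.natDegree * B * s := by
  haveI hqf : Fact q.Prime := ⟨hq⟩
  set ℓ := orderOf ((p : ZMod q)) with hℓdef
  haveI : Fact (Irreducible f) := ⟨hirr⟩
  set L := AdjoinRoot f with hLdef
  set φ : ZMod p →+* L := algebraMap (ZMod p) L with hφdef
  have hφinj : Function.Injective φ := φ.injective
  haveI : CharP L p := charP_of_injective_algebraMap hφinj p
  have hf0 : f ≠ 0 := hmon.ne_zero
  haveI : Fintype L := Module.fintypeOfFintype (AdjoinRoot.powerBasis hf0).basis
  have hcard : Fintype.card L = p ^ f.natDegree := by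
    rw [Module.card_fintype (AdjoinRoot.powerBasis hf0).basis, ZMod.card,
      Fintype.card_fin, AdjoinRoot.powerBasis_dim]
  set α : L := AdjoinRoot.root f with hαdef
  have hαf : Polynomial.aeval α f = 0 := by
    rw [AdjoinRoot.aeval_eq, AdjoinRoot.mk_self]
  have hDq : f ∣ (X ^ q - 1 : Polynomial (ZMod p)) :=
    hfd.trans ⟨X - 1, (geom_sum_mul X q).symm⟩
  have hαq : α ^ q = 1 := by
    obtain ⟨e, he⟩ := hDq
    have h2 : Polynomial.aeval α (X ^ q - 1 : Polynomial (ZMod p)) = 0 := by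
      rw [he, map_mul, hαf, zero_mul]
    rw [map_sub, map_pow, Polynomial.aeval_X, map_one, sub_eq_zero] at h2
    exact h2
  have hα0 : α ≠ 0 := by
    intro h
    rw [h, zero_pow hq.ne_zero] at hαq
    exact zero_ne_one hαq
  have hq0 : ((q : ℕ) : ZMod p) ≠ 0 := by
    rw [Ne, ZMod.natCast_eq_zero_iff]
    exact fun hdvd => hpq ((Nat.prime_dvd_prime_iff_eq hp.out hq).mp hdvd)
  have hD1 : Polynomial.eval 1 (∑ i ∈ Finset.range q, (X : Polynomial (ZMod p)) ^ i) = q := by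
    simp [Polynomial.eval_finset_sum]
  have hf1 : f.eval 1 ≠ 0 := by
    obtain ⟨e, he⟩ := hfd
    intro h0
    apply hq0
    rw [← hD1, he, Polynomial.eval_mul, h0, zero_mul]
  have hα1 : α ≠ 1 := by
    intro h1
    apply hf1
    have h2 : φ (f.eval 1) = 0 := by
      rw [← Polynomial.eval₂_hom φ 1, map_one]
      rw [h1] at hαf
      simpa [Polynomial.aeval_def] using hαf
    exact hφinj (by rw [h2, map_zero])
  have horder : orderOf α = q := orderOf_eq_prime hαq hα1
  -- the basic cast fact
  have hcast : ∀ d : ℕ, ((p : ZMod q)) ^ d = 1 ↔ q ∣ p ^ d - 1 := by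
    intro d
    have h1 : (1:ℕ) ≤ p ^ d := Nat.one_le_pow _ _ hp.out.pos
    rw [← Nat.cast_pow, show (1 : ZMod q) = ((1:ℕ) : ZMod q) by rw [Nat.cast_one],
      ZMod.natCast_eq_natCast_iff]
    exact ⟨fun h => (Nat.modEq_iff_dvd' h1).mp h.symm,
      fun h => ((Nat.modEq_iff_dvd' h1).mpr h).symm⟩
  have hkey : ∀ d : ℕ, α ^ (p ^ d) = α ↔ ℓ ∣ d := by
    intro d
    have e : p ^ d = (p ^ d - 1) + 1 := by
      have := Nat.one_le_pow d p hp.out.pos; omega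
    constructor
    · intro h
      rw [e, pow_succ] at h
      have h2 : α ^ (p ^ d - 1) = 1 :=
        mul_right_cancel₀ hα0 (h.trans (one_mul α).symm)
      have h3 : q ∣ p ^ d - 1 := horder ▸ orderOf_dvd_of_pow_eq_one h2
      rw [hℓdef]
      exact orderOf_dvd_of_pow_eq_one ((hcast d).mpr h3)
    · intro h
      have h2 : ((p : ZMod q)) ^ d = 1 := by
        rw [hℓdef] at h; exact orderOf_dvd_iff_pow_eq_one.mp h
      have h3 : q ∣ p ^ d - 1 := (hcast d).mp h2
      have h4 : α ^ (p ^ d - 1) = 1 :=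
        orderOf_dvd_iff_pow_eq_one.mp (horder ▸ h3)
      rw [e, pow_succ, h4, one_mul]
  have hℓpos : 0 < ℓ := by
    have hpz : ((p : ZMod q)) ≠ 0 := by
      rw [Ne, ZMod.natCast_eq_zero_iff]
      exact fun hdvd => hpq ((Nat.prime_dvd_prime_iff_eq hq hp.out).mp hdvd).symm
    have h2 : ((p : ZMod q)) ^ (q - 1) = 1 := ZMod.pow_card_sub_one_eq_one hpz
    exact orderOf_pos_iff.mpr (isOfFinOrder_iff_pow_eq_one.mpr
      ⟨q - 1, by have := hq.two_le; omega, h2⟩)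
  have hd0pos : 0 < f.natDegree := hirr.natDegree_pos
  -- ℓ ∣ natDegree f
  have hldvd : ℓ ∣ f.natDegree := by
    set αu : Lˣ := Units.mk0 α hα0 with hαu
    have h1 : orderOf αu = q := by
      rw [← horder, ← orderOf_units]; rfl
    have h2 : q ∣ Fintype.card Lˣ := h1 ▸ orderOf_dvd_card
    rw [Fintype.card_units, hcard] at h2
    rw [hℓdef]
    exact orderOf_dvd_iff_pow_eq_one.mpr ((hcast _).mpr h2)
  -- every element of L is fixed by x ↦ x ^ p ^ ℓ
  have hZfix : ∀ (n : ℕ) (a : ZMod p), a ^ (p ^ n) = a := by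
    intro n
    induction n with
    | zero => simp
    | succ n ih => intro a; rw [pow_succ, pow_mul, ih, ZMod.pow_card]
  have hLfix : ∀ x : L, x ^ (p ^ ℓ) = x := by
    have hαℓ : α ^ (p ^ ℓ) = α := (hkey ℓ).mpr dvd_rfl
    intro x
    obtain ⟨g₀, rfl⟩ := AdjoinRoot.mk_surjective x
    rw [← AdjoinRoot.aeval_eq, Polynomial.aeval_def]
    have hψ := iterateFrobenius_def (R := L) (p := p) (n := ℓ)
    calc (eval₂ φ α g₀) ^ (p ^ ℓ) = iterateFrobenius L p ℓ (eval₂ φ α g₀) := by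
          rw [iterateFrobenius_def]
      _ = eval₂ ((iterateFrobenius L p ℓ).comp φ) (iterateFrobenius L p ℓ α) g₀ :=
          Polynomial.hom_eval₂ _ _ _ _
      _ = eval₂ φ α g₀ := by
          have e1 : (iterateFrobenius L p ℓ).comp φ = φ := RingHom.ext fun a => by
            simp only [RingHom.comp_apply, iterateFrobenius_def, ← map_pow, hZfix]
          have e2 : iterateFrobenius L p ℓ α = α := by rw [iterateFrobenius_def, hαℓ]
          rw [e1, e2]
  -- natDegree f = ℓ
  have hdeg : f.natDegree = ℓ := by
    have hle : f.natDegree ≤ ℓ := by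
      set P : Polynomial L := X ^ (p ^ ℓ) - X with hPdef
      have hplℓ : 2 ≤ p ^ ℓ := by
        have h1 : p ≤ p ^ ℓ := by
          calc p = p ^ 1 := (pow_one p).symm
            _ ≤ p ^ ℓ := Nat.pow_le_pow_right hp.out.pos hℓpos
        have := hp.out.two_le; omega
      have hPdeg : P.natDegree = p ^ ℓ := by
        rw [hPdef]
        have h1 : (X : Polynomial L).natDegree < (X ^ (p ^ ℓ) : Polynomial L).natDegree := by
          rw [natDegree_X, natDegree_X_pow]; omega
        rw [natDegree_sub_eq_left_of_natDegree_lt h1, natDegree_X_pow]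
      have hP0 : P ≠ 0 := by
        intro h
        rw [h, natDegree_zero] at hPdeg
        omega
      have hsub : (Finset.univ : Finset L) ⊆ P.roots.toFinset := by
        intro x _
        rw [Multiset.mem_toFinset, Polynomial.mem_roots hP0]
        simp [hPdef, Polynomial.IsRoot, hLfix x]
      have hcardle : Fintype.card L ≤ p ^ ℓ := by
        calc Fintype.card L = (Finset.univ : Finset L).card := rfl
          _ ≤ P.roots.toFinset.card := Finset.card_le_card hsub
          _ ≤ Multiset.card P.roots := Multiset.toFinset_card_le _
          _ ≤ P.natDegree := Polynomial.card_roots' P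
          _ = p ^ ℓ := hPdeg
      rw [hcard] at hcardle
      exact (Nat.pow_le_pow_iff_right hp.out.one_lt).mp hcardle
    exact le_antisymm hle (Nat.le_of_dvd hd0pos hldvd)
  -- the factorization of f over L
  have hroot : ∀ i : ℕ, (f.map φ).eval (α ^ p ^ i) = 0 := by
    have hfrob : Polynomial.map (frobenius L p) (f.map φ) = f.map φ := by
      rw [Polynomial.map_map]
      congr 1
      ext a
      simp only [RingHom.comp_apply, frobenius_def, ← map_pow, ZMod.pow_card]
    intro i
    induction i with
    | zero =>
      simp only [pow_zero, pow_one]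
      rw [Polynomial.eval_map]
      simpa [Polynomial.aeval_def] using hαf
    | succ i ih =>
      have e1 : α ^ p ^ (i+1) = (α ^ p ^ i) ^ p := by
        rw [← pow_mul, pow_succ]
      rw [e1]
      calc (f.map φ).eval ((α ^ p ^ i) ^ p)
          = (f.map φ).eval (frobenius L p (α ^ p ^ i)) := by rw [frobenius_def]
        _ = ((Polynomial.map (frobenius L p) (f.map φ))).eval (frobenius L p (α ^ p ^ i)) := by
            rw [hfrob]
        _ = frobenius L p ((f.map φ).eval (α ^ p ^ i)) := by
            rw [Polynomial.eval_map, Polynomial.eval₂_hom]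
        _ = 0 := by rw [ih, map_zero]
  have hinj : ∀ i j : ℕ, i < j → j < ℓ → α ^ p ^ i ≠ α ^ p ^ j := by
    intro i j hij hj heq
    have e1 : (α ^ p ^ (j - i)) ^ p ^ i = α ^ p ^ j := by
      rw [← pow_mul, ← pow_add]
      congr 2
      omega
    have e2 : (α : L) ^ p ^ i = (α ^ p ^ (j-i)) ^ p ^ i := by rw [e1, heq]
    have e3 : α = α ^ p ^ (j - i) := by
      have hinj2 : Function.Injective (iterateFrobenius L p i) := (iterateFrobenius L p i).injective
      apply hinj2
      simp only [iterateFrobenius_def]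
      exact e2
    have e4 : ℓ ∣ j - i := (hkey (j-i)).mp e3.symm
    have := Nat.le_of_dvd (by omega) e4
    omega
  have hsplit : f.map φ = ∏ i ∈ Finset.range ℓ, (X - C (α ^ p ^ i)) := by
    have hmapne : f.map φ ≠ 0 := by
      rw [Ne, Polynomial.map_eq_zero_iff hφinj]
      exact hf0
    set M0 : Multiset L := (Finset.range ℓ).val.map (fun i => α ^ p ^ i) with hM0
    have hnodup : M0.Nodup := by
      rw [hM0]
      refine Multiset.Nodup.map_on ?_ (Finset.range ℓ).nodup
      intro i hi j hj hij
      rcases Nat.lt_trichotomy i j with h | h | h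
      · exact absurd hij (hinj i j h (Finset.mem_range.mp hj))
      · exact h
      · exact absurd hij.symm (hinj j i h (Finset.mem_range.mp hi))
    have hle : M0 ≤ (f.map φ).roots := by
      rw [Multiset.le_iff_count]
      intro a
      by_cases ha : a ∈ M0
      · have h1 : M0.count a ≤ 1 := Multiset.nodup_iff_count_le_one.mp hnodup a
        have h2 : 1 ≤ (f.map φ).roots.count a := by
          rw [Multiset.one_le_count_iff_mem, Polynomial.mem_roots hmapne]
          obtain ⟨i, hi, rfl⟩ := Multiset.mem_map.mp ha
          exact hroot i
        omega
      · rw [Multiset.count_eq_zero_of_notMem ha]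
        exact Nat.zero_le _
    have hdvd2 : (M0.map (fun a => X - C a)).prod ∣ f.map φ :=
      (Multiset.prod_dvd_prod_of_le (Multiset.map_le_map hle)).trans
        (Polynomial.prod_multiset_X_sub_C_dvd (f.map φ))
    have hmon2 : (M0.map (fun a => X - C a)).prod.Monic :=
      monic_multiset_prod_of_monic _ _ (fun a _ => monic_X_sub_C a)
    have hdeg2 : (M0.map (fun a => X - C a)).prod.natDegree = ℓ := by
      rw [Polynomial.natDegree_multiset_prod_of_monic _ (fun a ha => by
        obtain ⟨b, _, rfl⟩ := Multiset.mem_map.mp ha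
        exact monic_X_sub_C b)]
      rw [Multiset.map_map]
      have e5 : Multiset.map (natDegree ∘ fun a => X - C a) M0 = Multiset.map (fun _ => (1:ℕ)) M0 :=
        Multiset.map_congr rfl (fun x _ => by simp [Function.comp, natDegree_X_sub_C])
      rw [e5]
      simp [hM0]
    have heq := aux_monic_dvd_eq hmon2 (hmon.map φ) hdvd2 (by
      rw [hdeg2, natDegree_map, hdeg])
    rw [← heq, hM0, Multiset.map_map]
    rfl
  refine ⟨hdeg, ?_⟩
  intro m B s c hm1 hB1 hc g hg hgdeg
  haveI : NeZero ℓ := ⟨by omega⟩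
  set w : L := (α⁻¹) ^ c with hwdef
  have hw0 : w ≠ 0 := pow_ne_zero _ (inv_ne_zero hα0)
  have hmc1 : 1 ≤ m * c := by
    by_contra hcon
    have h0 : m * c = 0 := by omega
    rw [h0] at hc
    have h1 : (0:ℕ) % q = 1 % q := hc
    rw [Nat.zero_mod, Nat.mod_eq_of_lt hq.one_lt] at h1
    omega
  have hαcm : α ^ (m * c) = α := by
    have h3 : q ∣ m * c - 1 := (Nat.modEq_iff_dvd' hmc1).mp hc.symm
    have h4 : α ^ (m * c - 1) = 1 := orderOf_dvd_iff_pow_eq_one.mp (horder ▸ h3)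
    calc α ^ (m*c) = α ^ ((m*c - 1) + 1) := by congr 1; omega
      _ = α ^ (m*c-1) * α := pow_succ _ _
      _ = α := by rw [h4, one_mul]
  have hwm : ∀ i : ℕ, (w ^ p ^ i) ^ m = (α ^ p ^ i)⁻¹ := by
    intro i
    rw [hwdef, ← pow_mul, ← pow_mul, inv_pow]
    congr 1
    calc α ^ (c * (p ^ i * m)) = (α ^ (m * c)) ^ (p ^ i) := by
          rw [← pow_mul]; congr 1; ring
      _ = α ^ p ^ i := by rw [hαcm]
  set T : ZMod ℓ → Polynomial L := fun i => (g.map φ).comp (C (w ^ p ^ i.val) * X ^ B) with hTdef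
  have hgdvd : (g.map φ) ∣ (X ^ m - 1 : Polynomial L) := by
    have h1 : Polynomial.map φ g ∣ Polynomial.map φ (X ^ m - 1) := Polynomial.map_dvd φ hg
    simpa using h1
  have hβ0 : ∀ i : ℕ, (α ^ p ^ i) ≠ 0 := fun i => pow_ne_zero _ hα0
  have hTdvd : ∀ i : ZMod ℓ, T i ∣ (X ^ (m * B) - C (α ^ p ^ i.val)) := by
    intro i
    have h1 := aux_comp_dvd (r := C (w ^ p ^ i.val) * X ^ B) hgdvd
    have h2 : ((X:Polynomial L) ^ m - 1).comp (C (w ^ p ^ i.val) * X ^ B)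
        = C ((α ^ p ^ i.val)⁻¹) * (X ^ (m * B)) - 1 := by
      rw [sub_comp, pow_comp, X_comp, one_comp, mul_pow, ← C_pow, hwm, ← pow_mul, mul_comm B m]
    have h3 : C (α ^ p ^ i.val) * (C ((α ^ p ^ i.val)⁻¹) * (X ^ (m*B)) - 1)
        = X ^ (m*B) - C (α ^ p ^ i.val) := by
      rw [mul_sub, ← mul_assoc, ← C_mul, mul_inv_cancel₀ (hβ0 _), C_1, one_mul, mul_one]
    rw [h2] at h1
    have h4 : T i ∣ C (α ^ p ^ i.val) * (C ((α ^ p ^ i.val)⁻¹) * (X ^ (m*B)) - 1) :=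
      h1.mul_left _
    rw [h3] at h4
    exact h4
  set Gbig := ∏ i : ZMod ℓ, T i with hGbigdef
  have hmapcomp : Polynomial.map φ (f.comp (X ^ (m*B)))
      = ∏ i ∈ Finset.range ℓ, ((X:Polynomial L) ^ (m*B) - C (α ^ p ^ i)) := by
    rw [Polynomial.map_comp, Polynomial.map_pow, Polynomial.map_X, hsplit, aux_prod_comp]
    refine Finset.prod_congr rfl fun i _ => ?_
    rw [sub_comp, X_comp, C_comp]
  have hre : ∀ (F : ℕ → Polynomial L), ∏ i : ZMod ℓ, F i.val = ∏ i ∈ Finset.range ℓ, F i := by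
    intro F
    refine Finset.prod_bij (fun (a : ZMod ℓ) (_ : a ∈ Finset.univ) => a.val) ?_ ?_ ?_ ?_
    · intro a _; exact Finset.mem_range.mpr (ZMod.val_lt a)
    · intro a _ b _ hab; exact ZMod.val_injective ℓ hab
    · intro b hb
      exact ⟨(b : ZMod ℓ), Finset.mem_univ _, ZMod.val_natCast_of_lt (Finset.mem_range.mp hb)⟩
    · intro a _; rfl
  have hGbigdvd : Gbig ∣ Polynomial.map φ (f.comp (X ^ (m*B))) := by
    rw [hmapcomp, ← hre (fun n => (X:Polynomial L) ^ (m*B) - C (α ^ p ^ n))]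
    exact Finset.prod_dvd_prod_of_dvd _ _ (fun i _ => hTdvd i)
  have hwcyc : ∀ (y : L) (a : ℕ), y ^ p ^ (a + ℓ) = y ^ p ^ a := by
    intro y a
    rw [pow_add, mul_comm, pow_mul, hLfix y]
  have hwmod : ∀ (y : L) (a : ℕ), y ^ p ^ a = y ^ p ^ (a % ℓ) := by
    intro y a
    induction a using Nat.strong_induction_on with
    | _ a ih =>
      by_cases h : a < ℓ
      · rw [Nat.mod_eq_of_lt h]
      · push_neg at h
        have e : a = (a - ℓ) + ℓ := by omega
        calc y ^ p ^ a = y ^ p ^ ((a - ℓ) + ℓ) := by rw [← e]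
          _ = y ^ p ^ (a - ℓ) := hwcyc y _
          _ = y ^ p ^ ((a - ℓ) % ℓ) := ih _ (by omega)
          _ = y ^ p ^ (a % ℓ) := by rw [← Nat.mod_eq_sub_mod h]
  have hfrφ : Polynomial.map (frobenius L p) (g.map φ) = g.map φ := by
    rw [Polynomial.map_map]
    congr 1
    ext a
    simp only [RingHom.comp_apply, frobenius_def, ← map_pow, ZMod.pow_card]
  have hTmap : ∀ i : ZMod ℓ, (T i).map (frobenius L p) = T (i + 1) := by
    intro i
    rw [hTdef]
    dsimp only
    rw [Polynomial.map_comp, hfrφ, Polynomial.map_mul, Polynomial.map_C, Polynomial.map_pow,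
      Polynomial.map_X]
    congr 3
    rw [frobenius_def, ← pow_mul, ← pow_succ]
    have h3 : (i + 1 : ZMod ℓ).val % ℓ = (i.val + 1) % ℓ := by
      rw [Nat.mod_eq_of_lt (ZMod.val_lt _), ZMod.val_add, ZMod.val_one_eq_one_mod]
      conv_rhs => rw [Nat.add_mod]
      rw [Nat.mod_eq_of_lt (ZMod.val_lt i)]
    calc w ^ p ^ (i.val + 1) = w ^ p ^ ((i.val + 1) % ℓ) := hwmod _ _
      _ = w ^ p ^ ((i + 1 : ZMod ℓ).val % ℓ) := by rw [h3]
      _ = w ^ p ^ (i + 1 : ZMod ℓ).val := (hwmod _ _).symm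
  have hmapprod : Gbig.map (frobenius L p) = ∏ i : ZMod ℓ, (T i).map (frobenius L p) := by
    rw [hGbigdef, ← Polynomial.coe_mapRingHom, map_prod]
  have hfrobGbig : Gbig.map (frobenius L p) = Gbig := by
    rw [hmapprod, Finset.prod_congr rfl (fun i _ => hTmap i)]
    exact Fintype.prod_equiv (Equiv.addRight (1 : ZMod ℓ)) _ _ (fun i => rfl)
  have hcoeff : ∀ n : ℕ, (Gbig.coeff n) ^ p = Gbig.coeff n := by
    intro n
    have h1 := congrArg (fun P : Polynomial L => P.coeff n) hfrobGbig
    simpa [Polynomial.coeff_map, frobenius_def] using h1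
  have hfixrange : ∀ x : L, x ^ p = x → x ∈ Set.range ⇑φ := by
    intro x hx
    set Q : Polynomial L := X ^ p - X with hQdef
    have hp2 := hp.out.two_le
    have hQdeg : Q.natDegree = p := by
      rw [hQdef, natDegree_sub_eq_left_of_natDegree_lt
        (by rw [natDegree_X, natDegree_X_pow]; omega), natDegree_X_pow]
    have hQ0 : Q ≠ 0 := fun h => by rw [h, natDegree_zero] at hQdeg; omega
    have hSsub : (Finset.univ.image ⇑φ : Finset L) ⊆ Q.roots.toFinset := by
      intro a ha
      obtain ⟨b, _, rfl⟩ := Finset.mem_image.mp ha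
      rw [Multiset.mem_toFinset, Polynomial.mem_roots hQ0]
      simp only [hQdef, Polynomial.IsRoot, Polynomial.eval_sub, Polynomial.eval_pow,
        Polynomial.eval_X]
      rw [← map_pow, ZMod.pow_card, sub_self]
    have hScard : (Finset.univ.image ⇑φ : Finset L).card = p := by
      rw [Finset.card_image_of_injective _ hφinj, Finset.card_univ, ZMod.card]
    have hRcard : Q.roots.toFinset.card ≤ p := by
      calc Q.roots.toFinset.card ≤ Multiset.card Q.roots := Multiset.toFinset_card_le _
        _ ≤ Q.natDegree := Polynomial.card_roots' Q
        _ = p := hQdeg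
    have hEq : (Finset.univ.image ⇑φ : Finset L) = Q.roots.toFinset :=
      Finset.eq_of_subset_of_card_le hSsub (by omega)
    have hxmem : x ∈ Q.roots.toFinset := by
      rw [Multiset.mem_toFinset, Polynomial.mem_roots hQ0]
      simp [hQdef, Polynomial.IsRoot, hx]
    rw [← hEq] at hxmem
    obtain ⟨b, _, rfl⟩ := Finset.mem_image.mp hxmem
    exact ⟨b, rfl⟩
  have hlift : Gbig ∈ Polynomial.lifts φ := (Polynomial.lifts_iff_coeff_lifts Gbig).mpr
    (fun n => hfixrange _ (hcoeff n))
  obtain ⟨G₀, hG₀⟩ := hlift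
  have hG₀' : Polynomial.map φ G₀ = Gbig := hG₀
  have hTne : ∀ i : ZMod ℓ, T i ≠ 0 := by
    intro i
    have hmB : m * B ≠ 0 := by positivity
    have h1 : ((X:Polynomial L) ^ (m*B) - C (α ^ p ^ i.val)) ≠ 0 :=
      (monic_X_pow_sub_C _ hmB).ne_zero
    exact ne_zero_of_dvd_ne_zero h1 (hTdvd i)
  have hTdeg : ∀ i : ZMod ℓ, (T i).natDegree = s * B := by
    intro i
    rw [hTdef]
    dsimp only
    rw [natDegree_comp, natDegree_map, hgdeg]
    congr 1
    rw [natDegree_C_mul_X_pow _ _ (pow_ne_zero _ hw0)]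
  have hGbigdeg : Gbig.natDegree = ℓ * (s * B) := by
    rw [hGbigdef, natDegree_prod _ _ (fun i _ => hTne i),
      Finset.sum_congr rfl (fun i _ => hTdeg i), Finset.sum_const, Finset.card_univ, ZMod.card,
      smul_eq_mul]
  refine ⟨G₀, ?_, ?_⟩
  · have h2 : Polynomial.map φ G₀ ∣ Polynomial.map φ (f.comp (X ^ (m*B))) := by
      rw [hG₀']; exact hGbigdvd
    exact (Polynomial.map_dvd_map' φ).mp h2
  · have h3 : G₀.natDegree = Gbig.natDegree := by rw [← hG₀', natDegree_map]
    rw [h3, hGbigdeg, hdeg]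
    ring

lemma aux_p_case (p m k : ℕ) [hp : Fact p.Prime] (hm : 0 < m) (hmp : PPractical p m) :
    PPractical p (m * p ^ k) := by
  intro t ht1 htn
  have hpk : 1 ≤ p ^ k := Nat.one_le_pow _ _ hp.out.pos
  have hdm := Nat.div_add_mod (t - 1) m
  set a := (t - 1) / m with ha
  set s := (t - 1) % m + 1 with hs
  have hmod : (t - 1) % m < m := Nat.mod_lt _ hm
  have hts : t = a * m + s := by rw [mul_comm]; omega
  have hs1 : 1 ≤ s := by omega
  have hsm : s ≤ m := by omega
  have halt : a < p ^ k := by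
    rw [ha]
    rw [Nat.div_lt_iff_lt_mul hm]
    calc t - 1 < t := by omega
      _ ≤ m * p ^ k := htn
      _ = p ^ k * m := mul_comm _ _
  obtain ⟨g, hg, hgdeg⟩ := hmp s hs1 hsm
  have hX0 : ((X : Polynomial (ZMod p)) ^ m - 1) ≠ 0 := by
    have : ((X : Polynomial (ZMod p)) ^ m - C 1).Monic := monic_X_pow_sub_C _ (by omega)
    rw [C_1] at this
    exact this.ne_zero
  refine ⟨(X ^ m - 1) ^ a * g, ?_, ?_⟩
  · have h1 : ((X : Polynomial (ZMod p)) ^ m - 1) ^ a * g ∣ (X ^ m - 1) ^ (a + 1) := by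
      rw [pow_succ]
      exact mul_dvd_mul_left _ hg
    have h2 : ((X : Polynomial (ZMod p)) ^ m - 1) ^ (a+1) ∣ (X ^ m - 1) ^ (p ^ k) :=
      pow_dvd_pow _ (by omega)
    have h3 : ((X : Polynomial (ZMod p)) ^ m - 1) ^ (p ^ k) = X ^ (m * p ^ k) - 1 := by
      rw [sub_pow_char_pow (R := Polynomial (ZMod p))]
      rw [one_pow, ← pow_mul]
    exact (h1.trans h2).trans (h3 ▸ dvd_rfl)
  · have hg0 : g ≠ 0 := ne_zero_of_dvd_ne_zero hX0 hg
    rw [natDegree_mul (pow_ne_zero _ hX0) hg0, natDegree_pow, hgdeg]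
    have : ((X : Polynomial (ZMod p)) ^ m - 1).natDegree = m := by
      rw [← C_1, natDegree_X_pow_sub_C]
    rw [this]
    exact hts.symm

lemma aux_main (p q : ℕ) [hp : Fact p.Prime] (hq : q.Prime) (hpq : p ≠ q)
    (m : ℕ) (hm : 0 < m) (hmp : PPractical p m) (hqm : ¬ q ∣ m) (k : ℕ)
    (hcase : orderOf ((p : ZMod q)) ≤ m ∨ (k ≤ 1 ∧ orderOf ((p : ZMod q)) ≤ m + 1)) :
    PPractical p (m * q ^ k) := by
  haveI hqf : Fact q.Prime := ⟨hq⟩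
  set ℓ := orderOf ((p : ZMod q)) with hℓdef
  have hq2 := hq.two_le
  have hℓpos : 0 < ℓ := by
    have hpz : ((p : ZMod q)) ≠ 0 := by
      rw [Ne, ZMod.natCast_eq_zero_iff]
      exact fun hdvd => hpq ((Nat.prime_dvd_prime_iff_eq hq hp.out).mp hdvd).symm
    have h2 : ((p : ZMod q)) ^ (q - 1) = 1 := ZMod.pow_card_sub_one_eq_one hpz
    exact orderOf_pos_iff.mpr (isOfFinOrder_iff_pow_eq_one.mpr ⟨q - 1, by omega, h2⟩)
  set D := ∑ i ∈ Finset.range q, (X : Polynomial (ZMod p)) ^ i with hDdef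
  have hDmul : D * (X - 1) = X ^ q - 1 := geom_sum_mul X q
  have hXq0 : ((X : Polynomial (ZMod p)) ^ q - 1) ≠ 0 := by
    have h := monic_X_pow_sub_C (1 : ZMod p) (n := q) (by omega)
    rw [C_1] at h
    exact h.ne_zero
  have hD0 : D ≠ 0 := fun h => hXq0 (by rw [← hDmul, h, zero_mul])
  have hX1 : ((X : Polynomial (ZMod p)) - 1) ≠ 0 := by
    have h := monic_X_sub_C (1 : ZMod p)
    rw [C_1] at h
    exact h.ne_zero
  have hDdeg : D.natDegree = q - 1 := by
    have h1 : D.natDegree + ((X : Polynomial (ZMod p)) - 1).natDegree = q := by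
      rw [← natDegree_mul hD0 hX1, hDmul, ← C_1, natDegree_X_pow_sub_C]
    have h2 : ((X : Polynomial (ZMod p)) - 1).natDegree = 1 := by
      rw [← C_1, natDegree_X_sub_C]
    omega
  have hDmon : D.Monic := by
    have h1 : D.leadingCoeff * ((X : Polynomial (ZMod p)) - 1).leadingCoeff = 1 := by
      rw [← leadingCoeff_mul, hDmul]
      have h := monic_X_pow_sub_C (1 : ZMod p) (n := q) (by omega)
      rw [C_1] at h
      exact h.leadingCoeff
    have h2 : ((X : Polynomial (ZMod p)) - 1).leadingCoeff = 1 := by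
      have h := monic_X_sub_C (1 : ZMod p)
      rw [C_1] at h
      exact h.leadingCoeff
    rw [Monic, ← h1, h2, mul_one]
  -- factor D into monic irreducibles
  classical
  set fs := UniqueFactorizationMonoid.factors D with hfs
  set l := (fs.map (fun x => normalize x)).toList with hl
  have hmem : ∀ f ∈ l, f.Monic ∧ Irreducible f ∧ f ∣ D := by
    intro f hf
    rw [hl, Multiset.mem_toList, Multiset.mem_map] at hf
    obtain ⟨f0, hf0, rfl⟩ := hf
    have hirr0 : Irreducible f0 := UniqueFactorizationMonoid.irreducible_of_factor _ hf0
    have hne0 : f0 ≠ 0 := hirr0.ne_zero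
    have hassoc : Associated (normalize f0) f0 := normalize_associated f0
    refine ⟨monic_normalize hne0, hassoc.symm.irreducible hirr0, ?_⟩
    exact hassoc.dvd.trans (UniqueFactorizationMonoid.dvd_of_mem_factors hf0)
  have hprod : l.prod = D := by
    rw [hl, Multiset.prod_toList]
    have h1 : (fs.map (fun x => normalize x)).prod = normalize fs.prod := by
      have h0 := Multiset.prod_hom fs (MonoidWithZeroHom.toMonoidHom
        (normalizeHom : Polynomial (ZMod p) →*₀ Polynomial (ZMod p)))
      simpa [coe_normalizeHom] using h0
    rw [h1]
    have h2 : normalize fs.prod = normalize D := by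
      have ha := UniqueFactorizationMonoid.factors_prod hD0
      exact normalize_eq_normalize ha.dvd ha.symm.dvd
    rw [h2, hDmon.normalize_eq_self]
  set r := l.length with hr
  have hdegf : ∀ f ∈ l, f.natDegree = ℓ := by
    intro f hf
    obtain ⟨hfm, hfi, hfd⟩ := hmem f hf
    exact (aux_piece p q hq hpq f hfi hfm (hDdef ▸ hfd)).1
  have hlen : r * ℓ = q - 1 := by
    have h1 : (l.map natDegree).sum = D.natDegree := by
      have h0 := Polynomial.natDegree_multiset_prod_of_monic (l : Multiset (Polynomial (ZMod p)))
        (fun f hf => (hmem f (by simpa using hf)).1)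
      simpa [hprod] using h0.symm
    have h2 : (l.map natDegree).sum = (l.map (fun _ => ℓ)).sum := by
      congr 1
      exact List.map_congr_left (fun f hf => hdegf f hf)
    rw [h2] at h1
    rw [List.map_const', List.sum_replicate, smul_eq_mul] at h1
    rw [hr]
    omega
  -- modular inverse of m
  have hminv : ∃ c : ℕ, m * c ≡ 1 [MOD q] := by
    have hmz : (m : ZMod q) ≠ 0 := by
      rw [Ne, ZMod.natCast_eq_zero_iff]
      exact hqm
    refine ⟨((m : ZMod q)⁻¹).val, ?_⟩
    have h1 : ((m * ((m : ZMod q)⁻¹).val : ℕ) : ZMod q) = ((1:ℕ) : ZMod q) := by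
      push_cast
      rw [ZMod.natCast_val, ZMod.cast_id, mul_inv_cancel₀ hmz]
    exact (ZMod.natCast_eq_natCast_iff _ _ _).mp h1
  obtain ⟨c, hc⟩ := hminv
  -- divisors of X^m - 1 of every degree up to m
  have hgdiv : ∀ s : ℕ, s ≤ m → ∃ g : Polynomial (ZMod p),
      g ∣ (X : Polynomial (ZMod p)) ^ m - 1 ∧ g.natDegree = s := by
    intro s hsm
    rcases Nat.eq_zero_or_pos s with rfl | hs
    · exact ⟨1, one_dvd _, natDegree_one⟩
    · exact hmp s hs hsm
  -- main construction
  intro t ht1 htn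
  obtain ⟨s₀, u, hs₀, hu, hteq⟩ := aux_greedy m q ℓ (r * m) hq2 hℓpos
    (by rw [← mul_assoc, mul_comm ℓ r, hlen]) k t htn hcase
  -- level-j divisor of D.comp (X ^ (m * q ^ j)) of degree ℓ * q ^ j * u j
  have hlevel : ∀ j : ℕ, ∃ H : Polynomial (ZMod p),
      H ∣ D.comp ((X : Polynomial (ZMod p)) ^ (m * q ^ j)) ∧ H.natDegree = ℓ * q ^ j * u j := by
    intro j
    have hA1 : 1 ≤ m * q ^ j := by
      have := Nat.one_le_pow j q (by omega)
      exact Nat.one_le_iff_ne_zero.mpr (by positivity)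
    have hDcomp : D.comp ((X : Polynomial (ZMod p)) ^ (m * q ^ j))
        = ∏ i : Fin r, (l.get i).comp ((X : Polynomial (ZMod p)) ^ (m * q ^ j)) := by
      conv_lhs => rw [← hprod, ← List.ofFn_get l, List.prod_ofFn, aux_prod_comp]
    have hcompne : ∀ i : Fin r,
        (l.get i).comp ((X : Polynomial (ZMod p)) ^ (m * q ^ j)) ≠ 0 := by
      intro i
      have hmi := (hmem _ (l.get_mem i)).1
      refine (hmi.comp (monic_X_pow _) ?_).ne_zero
      rw [natDegree_X_pow]
      omega
    have hpieces : ∀ i : Fin r, ∃ G : Polynomial (ZMod p),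
        G ∣ (l.get i).comp ((X : Polynomial (ZMod p)) ^ (m * q ^ j)) ∧
        G.natDegree = ℓ * q ^ j * min m (u j - i.val * m) := by
      intro i
      obtain ⟨hfm, hfi, hfd⟩ := hmem _ (l.get_mem i)
      obtain ⟨g, hg, hgdeg⟩ := hgdiv (min m (u j - i.val * m)) (min_le_left _ _)
      obtain ⟨G, hG1, hG2⟩ := (aux_piece p q hq hpq _ hfi hfm (hDdef ▸ hfd)).2
        m (q ^ j) (min m (u j - i.val * m)) c hm (Nat.one_le_pow _ _ (by omega)) hc g hg hgdeg
      refine ⟨G, hG1, ?_⟩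
      rw [hG2, hdegf _ (l.get_mem i)]
    obtain ⟨H, hH1, hH2⟩ := aux_prod_div_helper Finset.univ _ _ (fun i _ => hcompne i)
      (fun i _ => hpieces i)
    refine ⟨H, by rw [hDcomp]; exact hH1, ?_⟩
    rw [hH2]
    have hsum : ∑ i : Fin r, min m (u j - i.val * m) = u j := by
      rw [Fin.sum_univ_eq_sum_range (fun i => min m (u j - i * m)) r]
      exact aux_sum_min m r (u j) (by rw [mul_comm] at hu ⊢; exact hu j)
    rw [← Finset.mul_sum]
    rw [hsum]
  -- assemble over levels
  have hlevne : ∀ j ∈ Finset.range k, D.comp ((X : Polynomial (ZMod p)) ^ (m * q ^ j)) ≠ 0 := by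
    intro j _
    have hA1 : 0 < m * q ^ j := by positivity
    refine (hDmon.comp (monic_X_pow _) ?_).ne_zero
    rw [natDegree_X_pow]
    omega
  obtain ⟨H, hH1, hH2⟩ := aux_prod_div_helper (Finset.range k) _ _ hlevne
    (fun j _ => hlevel j)
  obtain ⟨g₀, hg₀1, hg₀2⟩ := hgdiv s₀ hs₀
  have hXm0 : ((X : Polynomial (ZMod p)) ^ m - 1) ≠ 0 := by
    have h := monic_X_pow_sub_C (1 : ZMod p) (n := m) (by omega)
    rw [C_1] at h
    exact h.ne_zero
  refine ⟨g₀ * H, ?_, ?_⟩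
  · rw [aux_identity q m k]
    exact mul_dvd_mul hg₀1 hH1
  · have hg₀0 : g₀ ≠ 0 := ne_zero_of_dvd_ne_zero hXm0 hg₀1
    have hH0 : H ≠ 0 := by
      refine ne_zero_of_dvd_ne_zero ?_ hH1
      rw [Finset.prod_ne_zero_iff]
      exact hlevne
    rw [natDegree_mul hg₀0 hH0, hg₀2, hH2, ← hteq]

theorem stmt16 (p m q : ℕ) (hp : p.Prime) (hm : 0 < m) (hmp : PPractical p m)
    (hq : q.Prime) (hcop : Nat.gcd q m = 1) :
    (lstar p q ≤ m + 1 → PPractical p (m * q)) ∧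
    (∀ k : ℕ, 2 ≤ k → lstar p q ≤ m → PPractical p (m * q ^ k)) := by
  haveI hpf : Fact p.Prime := ⟨hp⟩
  by_cases hqp : q = p
  · subst hqp
    constructor
    · intro _
      simpa [pow_one] using aux_p_case q m 1 hm hmp
    · intro k _ _
      exact aux_p_case q m k hm hmp
  · have hpq : p ≠ q := fun h => hqp h.symm
    have hnd : ¬ p ∣ q := fun h => hpq ((Nat.prime_dvd_prime_iff_eq hp hq).mp h)
    have hord : ordCompl[p] q = q := by
      rw [Nat.factorization_eq_zero_of_not_dvd hnd, pow_zero, Nat.div_one]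
    have hls : lstar p q = orderOf ((p : ZMod q)) := by
      have h := congrArg (fun n => orderOf ((p : ZMod n))) hord
      simpa [lstar] using h
    have hqm : ¬ q ∣ m := by
      intro hdvd
      have h1 : q ∣ Nat.gcd q m := Nat.dvd_gcd dvd_rfl hdvd
      rw [hcop] at h1
      have h2 := Nat.dvd_one.mp h1
      have := hq.two_le
      omega
    constructor
    · intro hle
      have h := aux_main p q hq hpq m hm hmp hqm 1
        (Or.inr ⟨le_rfl, by rw [← hls]; exact hle⟩)
      simpa [pow_one] using h
    · intro k hk2 hle
      exact aux_main p q hq hpq m hm hmp hqm k (Or.inl (by rw [← hls]; exact hle))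
end

section
/- For each prime p, there exist infinitely many positive integers n that are p-practical but not λ-practical. -/
open scoped Classical

open Polynomial

namespace Stmt17Helper

variable {F : Type*} [Field F]

/-- `a ∣ b → X^a - 1 ∣ X^b - 1`. -/
lemma Xpow_sub_one_dvd {a b : ℕ} (h : a ∣ b) : (X ^ a - 1 : F[X]) ∣ X ^ b - 1 := by
  obtain ⟨t, rfl⟩ := h
  simpa [pow_mul] using sub_dvd_pow_sub_pow (X ^ a : F[X]) 1 t

/-- if `q ∣ X^a - 1` and `q ∣ X^b - 1` then `q ∣ X^(gcd a b) - 1`. -/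
lemma dvd_Xpow_gcd (q : F[X]) : ∀ a b : ℕ, q ∣ X ^ a - 1 → q ∣ X ^ b - 1 →
    q ∣ X ^ Nat.gcd a b - 1 := by
  intro a
  induction a using Nat.strong_induction_on with
  | _ a ih =>
    intro b ha hb
    rcases Nat.eq_zero_or_pos a with rfl | hpos
    · simpa using hb
    · rw [Nat.gcd_rec]
      refine ih (b % a) (Nat.mod_lt _ hpos) a ?_ ha
      have h1 : (X ^ a - 1 : F[X]) ∣ X ^ (a * (b / a)) - 1 := Xpow_sub_one_dvd ⟨_, rfl⟩
      have h2 : (X ^ (b % a) : F[X]) * (X ^ (a * (b / a)) - 1) = X ^ b - X ^ (b % a) := by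
        rw [mul_sub, mul_one, ← pow_add]
        congr 2
        rw [Nat.mod_add_div]
      have h3 : q ∣ X ^ b - X ^ (b % a) := by
        rw [← h2]
        exact Dvd.dvd.mul_left (ha.trans h1) _
      have h4 : (X ^ (b % a) - 1 : F[X]) = (X ^ b - 1) - (X ^ b - X ^ (b % a)) := by ring
      rw [h4]
      exact dvd_sub hb h3

lemma zmod_pow_pow (ℓ : ℕ) [Fact ℓ.Prime] (D : ℕ) (c : ZMod ℓ) : c ^ ℓ ^ D = c := by
  induction D with
  | zero => simp
  | succ D ihD => rw [pow_succ, pow_mul, ihD, ZMod.pow_card]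

/-- Key facts about an irreducible factor of `X^n - 1` over `ZMod ℓ`. -/
lemma irreducible_factor_facts {ℓ : ℕ} [Fact ℓ.Prime] (h : (ZMod ℓ)[X])
    (hi : Irreducible h) {n : ℕ} (hn : 0 < n) (hdvd : h ∣ X ^ n - 1) :
    h ∣ X ^ (ℓ ^ h.natDegree - 1) - 1 ∧
      ∀ D : ℕ, 0 < D → n ∣ ℓ ^ D - 1 → h.natDegree ≤ D := by
  haveI := Fact.mk hi
  have hℓ : ℓ.Prime := Fact.out
  have hne : h ≠ 0 := hi.ne_zero
  set K := AdjoinRoot h with hK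
  letI : Module.Finite (ZMod ℓ) K := Module.Finite.of_basis (AdjoinRoot.powerBasis hne).basis
  letI : Fintype K := by
    have : Finite K := Module.finite_of_finite (ZMod ℓ)
    exact Fintype.ofFinite K
  have hcard : Fintype.card K = ℓ ^ h.natDegree := by
    rw [Module.card_eq_pow_finrank (K := ZMod ℓ) (V := K), ZMod.card,
      (AdjoinRoot.powerBasis hne).finrank, AdjoinRoot.powerBasis_dim]
  set x : K := AdjoinRoot.root h with hx
  have hxn : x ^ n = 1 := by
    have := AdjoinRoot.mk_eq_zero.mpr hdvd
    rw [map_sub, map_pow, map_one, AdjoinRoot.mk_X, sub_eq_zero] at this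
    exact this
  have hx0 : x ≠ 0 := by
    intro h0
    rw [h0, zero_pow (by omega)] at hxn
    exact zero_ne_one hxn
  constructor
  · have hcs : x ^ (ℓ ^ h.natDegree - 1) = 1 := by
      rw [← hcard]
      exact FiniteField.pow_card_sub_one_eq_one x hx0
    rw [← AdjoinRoot.mk_eq_zero (f := h)]
    rw [map_sub, map_pow, map_one, AdjoinRoot.mk_X, sub_eq_zero]
    exact hcs
  · intro D hD hnD
    obtain ⟨t, ht⟩ := hnD
    have hxD : x ^ (ℓ ^ D - 1) = 1 := by
      rw [ht, pow_mul, hxn, one_pow]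
    have hxD' : x ^ (ℓ ^ D) = x := by
      have hpos : 0 < ℓ ^ D := (pow_pos hℓ.pos D)
      calc x ^ ℓ ^ D = x ^ (ℓ ^ D - 1) * x ^ 1 := by rw [← pow_add]; congr 1; omega
      _ = x := by rw [hxD, one_mul, pow_one]
    -- every element of K satisfies y ^ ℓ ^ D = y
    haveI : CharP K ℓ := charP_of_injective_algebraMap (algebraMap (ZMod ℓ) K).injective ℓ
    have hzmod : ∀ c : ZMod ℓ, c ^ ℓ ^ D = c := fun c => zmod_pow_pow ℓ D c
    let S : Subalgebra (ZMod ℓ) K :=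
      { carrier := {y | y ^ ℓ ^ D = y}
        mul_mem' := by
          intro a b ha hb
          simp only [Set.mem_setOf_eq] at *
          rw [mul_pow, ha, hb]
        one_mem' := by simp
        add_mem' := by
          intro a b ha hb
          simp only [Set.mem_setOf_eq] at *
          rw [add_pow_char_pow, ha, hb]
        zero_mem' := by
          simp only [Set.mem_setOf_eq]
          exact zero_pow ((pow_pos hℓ.pos D)).ne'
        algebraMap_mem' := by
          intro c
          simp only [Set.mem_setOf_eq]
          rw [← map_pow, hzmod c] }
    have hStop : S = ⊤ := by
      rw [eq_top_iff, ← AdjoinRoot.adjoinRoot_eq_top (f := h)]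
      exact Algebra.adjoin_le (Set.singleton_subset_iff.mpr hxD')
    have hall : ∀ y : K, y ^ ℓ ^ D = y := by
      intro y
      have : y ∈ S := hStop ▸ Algebra.mem_top
      simpa [S] using this
    -- count roots
    set P : K[X] := X ^ ℓ ^ D - X with hP
    have hℓD : 1 < ℓ ^ D := by
      calc 1 < ℓ := hℓ.one_lt
      _ = ℓ ^ 1 := (pow_one ℓ).symm
      _ ≤ ℓ ^ D := Nat.pow_le_pow_right hℓ.pos hD
    have hPdeg : P.natDegree = ℓ ^ D := by
      rw [hP]
      have h1 : (X : K[X]).natDegree < (X ^ ℓ ^ D : K[X]).natDegree := by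
        rw [natDegree_X, natDegree_X_pow]; omega
      rw [natDegree_sub_eq_left_of_natDegree_lt h1, natDegree_X_pow]
    have hP0 : P ≠ 0 := by
      intro h0
      rw [h0] at hPdeg
      simp at hPdeg
      omega
    have hroots : (Finset.univ : Finset K) ⊆ P.roots.toFinset := by
      intro y _
      rw [Multiset.mem_toFinset, mem_roots hP0]
      simp [hP, Polynomial.IsRoot, hall y]
    have hcardle : Fintype.card K ≤ ℓ ^ D := by
      calc Fintype.card K = (Finset.univ : Finset K).card := rfl
      _ ≤ P.roots.toFinset.card := Finset.card_le_card hroots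
      _ ≤ Multiset.card P.roots := P.roots.toFinset_card_le
      _ ≤ P.natDegree := P.card_roots'
      _ = ℓ ^ D := hPdeg
    rw [hcard] at hcardle
    exact (Nat.pow_le_pow_iff_right hℓ.one_lt).mp hcardle

lemma card_le_one_of_allEq {α : Type*} {s : Multiset α} (hnd : s.Nodup)
    (hall : ∀ x ∈ s, ∀ y ∈ s, x = y) : Multiset.card s ≤ 1 := by
  by_contra hc
  push_neg at hc
  have h0 : 0 < Multiset.card s := by omega
  obtain ⟨a, ha⟩ := Multiset.card_pos_iff_exists_mem.mp h0
  obtain ⟨s', rfl⟩ := Multiset.exists_cons_of_mem ha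
  have hcard : 0 < Multiset.card s' := by
    have h1 := Multiset.card_cons a s'
    omega
  obtain ⟨b, hb⟩ := Multiset.card_pos_iff_exists_mem.mp hcard
  have hab : a = b := hall a (Multiset.mem_cons_self _ _) b (Multiset.mem_cons_of_mem hb)
  exact (Multiset.nodup_cons.mp hnd).1 (hab ▸ hb)

/-- Key non-practicality criterion. -/
lemma key {ℓ : ℕ} (hℓ : ℓ.Prime) {n m D : ℕ} (hn : 0 < n) (hln : ¬ ℓ ∣ n) (hD1 : 0 < D)
    (hgcd : ∀ d, 0 < d → d ≤ m → Nat.gcd n (ℓ ^ d - 1) ∣ D) (hDm : D < m) :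
    ¬ ∃ g : (ZMod ℓ)[X], g ∣ X ^ n - 1 ∧ g.natDegree = m := by
  haveI := Fact.mk hℓ
  rintro ⟨g, hg, hdeg⟩
  have hf0 : (X ^ n - 1 : (ZMod ℓ)[X]) ≠ 0 := by
    have : (X ^ n - 1 : (ZMod ℓ)[X]) = X ^ n - C 1 := by rw [map_one]
    rw [this]
    exact (monic_X_pow_sub_C 1 (by omega)).ne_zero
  have hg0 : g ≠ 0 := by
    intro h0
    rw [h0, zero_dvd_iff] at hg
    exact hf0 hg
  have hsep : (X ^ n - 1 : (ZMod ℓ)[X]).Separable := by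
    have hne : ((n : ZMod ℓ)) ≠ 0 := by
      rwa [Ne, ZMod.natCast_eq_zero_iff]
    simpa using Polynomial.separable_X_pow_sub_C (1 : ZMod ℓ) hne one_ne_zero
  have hsqf : Squarefree (X ^ n - 1 : (ZMod ℓ)[X]) := hsep.squarefree
  have hsqg : Squarefree g := hsqf.squarefree_of_dvd hg
  set S := UniqueFactorizationMonoid.normalizedFactors g with hS
  have hprime : ∀ h ∈ S, Prime h := fun h hh =>
    UniqueFactorizationMonoid.prime_of_normalized_factor h hh
  have hnodup : S.Nodup :=
    (UniqueFactorizationMonoid.squarefree_iff_nodup_normalizedFactors hg0).mp hsqg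
  have hnorm : ∀ h ∈ S, normalize h = h := fun h hh =>
    UniqueFactorizationMonoid.normalize_normalized_factor h hh
  have hdvdD : ∀ h ∈ S, h ∣ X ^ D - 1 := by
    intro h hh
    have hirr : Irreducible h := (hprime h hh).irreducible
    have hdvdg : h ∣ g := UniqueFactorizationMonoid.dvd_of_mem_normalizedFactors hh
    have hdvdf : h ∣ X ^ n - 1 := hdvdg.trans hg
    have hd1 : 0 < h.natDegree := hirr.natDegree_pos
    have hdm : h.natDegree ≤ m := hdeg ▸ Polynomial.natDegree_le_of_dvd hdvdg hg0
    have h1 := (irreducible_factor_facts h hirr hn hdvdf).1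
    have h2 := dvd_Xpow_gcd h n (ℓ ^ h.natDegree - 1) hdvdf h1
    exact h2.trans (Xpow_sub_one_dvd (hgcd _ hd1 hdm))
  have hcount : ∀ a : (ZMod ℓ)[X], S.countP (Associated a) ≤ 1 := by
    intro a
    rw [Multiset.countP_eq_card_filter]
    refine card_le_one_of_allEq (hnodup.filter _) ?_
    intro x hxm y hym
    rw [Multiset.mem_filter] at hxm hym
    have hxy : Associated x y := hxm.2.symm.trans hym.2
    calc x = normalize x := (hnorm x hxm.1).symm
    _ = normalize y := normalize_eq_normalize hxy.dvd hxy.symm.dvd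
    _ = y := hnorm y hym.1
  have hprod : S.prod ∣ X ^ D - 1 := Multiset.prod_primes_dvd _ hprime hdvdD hcount
  have hassoc : Associated S.prod g := UniqueFactorizationMonoid.prod_normalizedFactors hg0
  have hgdvd : g ∣ X ^ D - 1 := hassoc.symm.dvd.trans hprod
  have hXD : (X ^ D - 1 : (ZMod ℓ)[X]) ≠ 0 := by
    have : (X ^ D - 1 : (ZMod ℓ)[X]) = X ^ D - C 1 := by rw [map_one]
    rw [this]
    exact (monic_X_pow_sub_C 1 (by omega)).ne_zero
  have hle : m ≤ D := by
    have h5 := Polynomial.natDegree_le_of_dvd hgdvd hXD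
    have h6 : (X ^ D - 1 : (ZMod ℓ)[X]) = X ^ D - C 1 := by rw [map_one]
    rw [hdeg, h6, natDegree_X_pow_sub_C] at h5
    exact h5
  omega

lemma nsmul_map_sum {α : Type*} (c : ℕ) (M : Multiset α) (f : α → ℕ) :
    ((c • M).map f).sum = c * (M.map f).sum := by
  induction c with
  | zero => simp
  | succ c ih => rw [succ_nsmul, Multiset.map_add, Multiset.sum_add, ih]; ring

lemma nsmul_prod {α : Type*} [CommMonoid α] (c : ℕ) (M : Multiset α) :
    (c • M).prod = M.prod ^ c := by
  induction c with
  | zero => simp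
  | succ c ih => rw [succ_nsmul, Multiset.prod_add, ih, pow_succ]

lemma mem_of_mem_nsmul {α : Type*} {c : ℕ} {M : Multiset α} {x : α} (h : x ∈ c • M) : x ∈ M :=
  (Multiset.mem_nsmul.mp h).2

/-- subset-sum style lemma -/
lemma exists_sub_multiset (B : ℕ) (s : Multiset F[X])
    (hdeg : ∀ h ∈ s, 1 ≤ h.natDegree ∧ h.natDegree ≤ B + 1) :
    ∀ m, m ≤ B + (s.map Polynomial.natDegree).sum →
    ∃ t, t ≤ s ∧ ∃ a, a ≤ B ∧ a + (t.map Polynomial.natDegree).sum = m := by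
  induction s using Multiset.induction_on with
  | empty =>
    intro m hm
    exact ⟨0, le_rfl, m, by simpa using hm, by simp⟩
  | cons h s ih =>
    intro m hm
    by_cases hcase : m ≤ B + (s.map Polynomial.natDegree).sum
    · obtain ⟨t, ht, a, ha, hsum⟩ := ih (fun x hx => hdeg x (Multiset.mem_cons_of_mem hx)) m hcase
      exact ⟨t, ht.trans (Multiset.le_cons_self _ _), a, ha, hsum⟩
    · push_neg at hcase
      have he := hdeg h (Multiset.mem_cons_self h s)
      rw [Multiset.map_cons, Multiset.sum_cons] at hm
      obtain ⟨t, ht, a, ha, hsum⟩ := ih (fun x hx => hdeg x (Multiset.mem_cons_of_mem hx))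
        (m - h.natDegree) (by omega)
      refine ⟨h ::ₘ t, Multiset.cons_le_cons _ ht, a, ha, ?_⟩
      rw [Multiset.map_cons, Multiset.sum_cons]
      omega

/-- `2^k * q` is 2-practical when `q ∣ 2^r - 1` and `r ≤ 2^k + 1`. -/
lemma ppractical_two (k q r : ℕ) (hq : q.Prime) (hr : 0 < r)
    (hqdvd : q ∣ 2 ^ r - 1) (hrk : r ≤ 2 ^ k + 1) : PPractical 2 (2 ^ k * q) := by
  haveI : Fact (Nat.Prime 2) := ⟨Nat.prime_two⟩
  intro m _ hmn
  set Φ : (ZMod 2)[X] := ∑ i ∈ Finset.range q, X ^ i with hΦdef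
  have hΦ : Φ * (X - 1) = X ^ q - 1 := geom_sum_mul X q
  have hXq0 : (X ^ q - 1 : (ZMod 2)[X]) ≠ 0 := by
    have e1 : (X ^ q - 1 : (ZMod 2)[X]) = X ^ q - C 1 := by rw [map_one]
    rw [e1]
    exact (monic_X_pow_sub_C (1 : ZMod 2) hq.pos.ne').ne_zero
  have hΦ0 : Φ ≠ 0 := by
    intro h0
    rw [h0, zero_mul] at hΦ
    exact hXq0 hΦ.symm
  have hX1 : (X - 1 : (ZMod 2)[X]) = X - C 1 := by rw [map_one]
  have hX10 : (X - 1 : (ZMod 2)[X]) ≠ 0 := by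
    rw [hX1]
    exact X_sub_C_ne_zero 1
  have hΦdeg : Φ.natDegree = q - 1 := by
    have h1 : (Φ * (X - 1)).natDegree = Φ.natDegree + 1 := by
      rw [natDegree_mul hΦ0 hX10, hX1, natDegree_X_sub_C]
    rw [hΦ] at h1
    have h2 : (X ^ q - 1 : (ZMod 2)[X]).natDegree = q := by
      have e1 : (X ^ q - 1 : (ZMod 2)[X]) = X ^ q - C 1 := by rw [map_one]
      rw [e1, natDegree_X_pow_sub_C]
    omega
  set M := UniqueFactorizationMonoid.normalizedFactors Φ with hM
  have hMprod : Associated M.prod Φ := UniqueFactorizationMonoid.prod_normalizedFactors hΦ0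
  have hMprime : ∀ h ∈ M, Prime h := fun h hh =>
    UniqueFactorizationMonoid.prime_of_normalized_factor h hh
  have hMmonic : ∀ h ∈ M, h.Monic := by
    intro h hh
    have h1 : normalize h = h := UniqueFactorizationMonoid.normalize_normalized_factor h hh
    rw [← h1]
    exact monic_normalize (hMprime h hh).ne_zero
  have hMdeg : ∀ h ∈ M, 1 ≤ h.natDegree ∧ h.natDegree ≤ 2 ^ k + 1 := by
    intro h hh
    have hirr : Irreducible h := (hMprime h hh).irreducible
    have hdvdq : h ∣ X ^ q - 1 := by
      refine ((UniqueFactorizationMonoid.dvd_of_mem_normalizedFactors hh).trans ?_)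
      exact ⟨X - 1, hΦ.symm⟩
    refine ⟨hirr.natDegree_pos, ?_⟩
    have := (irreducible_factor_facts h hirr hq.pos hdvdq).2 r hr hqdvd
    omega
  have hMp0 : M.prod ≠ 0 := by
    intro h0
    obtain ⟨u, hu⟩ := hMprod
    rw [h0, zero_mul] at hu
    exact hΦ0 hu.symm
  have hMsum : (M.map Polynomial.natDegree).sum = q - 1 := by
    have h1 : M.prod.natDegree = (M.map Polynomial.natDegree).sum := by
      have := natDegree_multiset_prod_of_monic (t := M.map id) (fun f hf => by
        simp only [Multiset.map_id] at hf; exact hMmonic f hf)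
      simpa using this
    have h2 : M.prod.natDegree = Φ.natDegree :=
      le_antisymm (Polynomial.natDegree_le_of_dvd hMprod.dvd hΦ0)
        (Polynomial.natDegree_le_of_dvd hMprod.symm.dvd hMp0)
    omega
  have hsdeg : ∀ h ∈ (2 ^ k • M), 1 ≤ h.natDegree ∧ h.natDegree ≤ 2 ^ k + 1 :=
    fun h hh => hMdeg h (mem_of_mem_nsmul hh)
  have hmle : m ≤ 2 ^ k + ((2 ^ k • M).map Polynomial.natDegree).sum := by
    rw [nsmul_map_sum, hMsum]
    have hq1 : 1 ≤ q := hq.pos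
    have hsplit : 2 ^ k * q = 2 ^ k * (q - 1) + 2 ^ k := by
      obtain ⟨c, rfl⟩ := Nat.exists_eq_add_of_le hq1
      rw [Nat.add_sub_cancel_left]
      ring
    omega
  obtain ⟨t, ht, a, ha, hsum⟩ := exists_sub_multiset (2 ^ k) (2 ^ k • M) hsdeg m hmle
  refine ⟨(X - 1) ^ a * t.prod, ?_, ?_⟩
  · have hd1 : ((X - 1 : (ZMod 2)[X])) ^ a ∣ (X - 1) ^ 2 ^ k := pow_dvd_pow _ ha
    have hd2 : t.prod ∣ Φ ^ 2 ^ k := by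
      calc t.prod ∣ (2 ^ k • M).prod := Multiset.prod_dvd_prod_of_le ht
      _ = M.prod ^ 2 ^ k := nsmul_prod _ _
      _ ∣ Φ ^ 2 ^ k := pow_dvd_pow_of_dvd hMprod.dvd _
    have hfinal : ((X - 1 : (ZMod 2)[X])) ^ 2 ^ k * Φ ^ 2 ^ k = X ^ (2 ^ k * q) - 1 := by
      rw [← mul_pow]
      have e1 : ((X - 1 : (ZMod 2)[X])) * Φ = X ^ q - 1 := by rw [mul_comm]; exact hΦ
      rw [e1]
      have hc := sub_pow_char_pow (R := (ZMod 2)[X]) (p := 2) (X ^ q) 1 (n := k)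
      rw [hc, one_pow, ← pow_mul, mul_comm q (2 ^ k)]
    calc (X - 1 : (ZMod 2)[X]) ^ a * t.prod ∣ (X - 1) ^ 2 ^ k * Φ ^ 2 ^ k := mul_dvd_mul hd1 hd2
    _ = X ^ (2 ^ k * q) - 1 := hfinal
  · have hmonic : ∀ f ∈ t, Monic f := fun f hf => hMmonic f (mem_of_mem_nsmul (Multiset.mem_of_le ht hf))
    have hm1 : ((X - 1 : (ZMod 2)[X]) ^ a).Monic := by
      rw [hX1]; exact (monic_X_sub_C (1 : ZMod 2)).pow a
    have hm2 : t.prod.Monic := by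
      have := monic_multiset_prod_of_monic t id (fun f hf => hmonic f hf)
      simpa using this
    rw [hm1.natDegree_mul hm2]
    have hda : ((X - 1 : (ZMod 2)[X]) ^ a).natDegree = a := by
      rw [hX1, natDegree_pow, natDegree_X_sub_C, mul_one]
    have hdt : t.prod.natDegree = (t.map Polynomial.natDegree).sum := by
      have := natDegree_multiset_prod_of_monic (t := t.map id) (fun f hf => by
        simp only [Multiset.map_id] at hf; exact hmonic f hf)
      simpa using this
    omega


lemma exists_pow2 : ∀ M : ℕ, 1 ≤ M → ∃ k : ℕ, M ≤ 2 ^ k ∧ 2 ^ k < 2 * M := by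
  intro M
  induction M with
  | zero => omega
  | succ M ih =>
    intro _
    rcases Nat.eq_zero_or_pos M with rfl | hM
    · exact ⟨0, by norm_num⟩
    · obtain ⟨k, h1, h2⟩ := ih hM
      by_cases hc : M + 1 ≤ 2 ^ k
      · exact ⟨k, hc, by omega⟩
      · have he : 2 ^ k = M := by omega
        refine ⟨k + 1, ?_, ?_⟩ <;> rw [pow_succ] <;> omega

lemma infinite_of_unbounded {S : Set ℕ} (h : ∀ N, ∃ n ∈ S, N < n) : S.Infinite := by
  refine Set.infinite_of_not_bddAbove ?_
  rintro ⟨N, hN⟩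
  obtain ⟨n, hnS, hn⟩ := h N
  exact absurd (hN hnS) (by omega)

lemma ppractical_prime_pow (p : ℕ) (hp : p.Prime) (k : ℕ) : PPractical p (p ^ k) := by
  haveI := Fact.mk hp
  intro m hm1 hmn
  refine ⟨(X - C 1) ^ m, ?_, ?_⟩
  · have hchar : ((X : (ZMod p)[X]) - C 1) ^ p ^ k = X ^ p ^ k - 1 := by
      rw [sub_pow_char_pow (R := (ZMod p)[X]) (p := p) X (C 1) (n := k), ← map_pow, one_pow,
        map_one]
    exact hchar ▸ pow_dvd_pow _ hmn
  · rw [natDegree_pow, natDegree_X_sub_C, mul_one]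

lemma not_lambda_odd (p : ℕ) (hp : p.Prime) (hp2 : p ≠ 2) (hp3 : p ≠ 3) (k : ℕ) (hk : 0 < k) :
    ¬ LambdaPractical (p ^ k) := by
  intro hL
  have h2 : Nat.Prime 2 := Nat.prime_two
  obtain ⟨g, hg, hdeg⟩ := hL 2 h2 2 (by omega) (by
    calc 2 ≤ p := hp.two_le
    _ ≤ p ^ k := Nat.le_self_pow hk.ne' p)
  refine key h2 (n := p ^ k) (m := 2) (D := 1) (pow_pos hp.pos k) ?_ one_pos ?_ one_lt_two
    ⟨g, hg, hdeg⟩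
  · intro hdvd
    have h3 := (Nat.prime_dvd_prime_iff_eq h2 hp).mp (h2.dvd_of_dvd_pow hdvd)
    exact hp2 h3.symm
  · intro d hd1 hd2
    interval_cases d
    · norm_num
    · have hcop : Nat.Coprime (p ^ k) 3 :=
        Nat.Coprime.pow_left k ((Nat.coprime_primes hp Nat.prime_three).mpr hp3)
      have hg3 : Nat.gcd (p ^ k) 3 = 1 := hcop
      norm_num [hg3]

lemma not_lambda_three (k : ℕ) (hk : 2 ≤ k) : ¬ LambdaPractical (3 ^ k) := by
  intro hL
  obtain ⟨g, hg, hdeg⟩ := hL 2 Nat.prime_two 4 (by omega) (by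
    calc 4 ≤ 3 ^ 2 := by norm_num
    _ ≤ 3 ^ k := Nat.pow_le_pow_right (by norm_num) hk)
  refine key Nat.prime_two (n := 3 ^ k) (m := 4) (D := 3) (pow_pos (by norm_num) k) ?_
    (by norm_num) ?_ (by norm_num) ⟨g, hg, hdeg⟩
  · intro hdvd
    have h3 := (Nat.prime_dvd_prime_iff_eq Nat.prime_two Nat.prime_three).mp
      (Nat.prime_two.dvd_of_dvd_pow hdvd)
    norm_num at h3
  · intro d hd1 hd2
    interval_cases d
    · norm_num
    · have : Nat.gcd (3 ^ k) 3 ∣ 3 := Nat.gcd_dvd_right _ _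
      norm_num [this]
    · have hcop : Nat.Coprime (3 ^ k) 7 := Nat.Coprime.pow_left k (by decide)
      have hg7 : Nat.gcd (3 ^ k) 7 = 1 := hcop
      norm_num [hg7]
    · have hnum : (2:ℕ) ^ 4 - 1 = 15 := by norm_num
      rw [hnum]
      have hG : Nat.gcd (3 ^ k) 15 ∣ 3 ^ k := Nat.gcd_dvd_left _ _
      obtain ⟨j, hj, hGeq⟩ := (Nat.dvd_prime_pow Nat.prime_three).mp hG
      have h15 : Nat.gcd (3 ^ k) 15 ∣ 15 := Nat.gcd_dvd_right _ _
      rw [hGeq] at h15 ⊢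
      match j with
      | 0 => simpa using one_dvd _
      | 1 => simp
      | (j+2) =>
        exfalso
        have h9 : (9 : ℕ) ∣ 3 ^ (j + 2) := by
          have h92 : (3:ℕ) ^ 2 ∣ 3 ^ (j + 2) := pow_dvd_pow 3 (by omega)
          simpa using h92
        have h915 := h9.trans h15
        omega

lemma two_case (r : ℕ) (hr : r.Prime) (hr3 : 3 ≤ r) :
    ∃ n, r < n ∧ 0 < n ∧ PPractical 2 n ∧ ¬ LambdaPractical n := by
  have h2r1 : 2 ^ r - 1 ≠ 1 := by
    have h8 : (8:ℕ) ≤ 2 ^ r := by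
      calc (8:ℕ) = 2 ^ 3 := by norm_num
      _ ≤ 2 ^ r := Nat.pow_le_pow_right (by norm_num) hr3
    omega
  set q := (2 ^ r - 1).minFac with hqdef
  have hq : q.Prime := Nat.minFac_prime h2r1
  have hqdvd : q ∣ 2 ^ r - 1 := Nat.minFac_dvd _
  have h1le : (1:ℕ) ≤ 2 ^ r := Nat.one_le_two_pow
  have hq2 : q ≠ 2 := by
    intro h0
    have h1 : (2:ℕ) ∣ 2 ^ r := dvd_pow_self 2 (by omega)
    have h2 : (2:ℕ) ∣ 2 ^ r - (2 ^ r - 1) := Nat.dvd_sub h1 (h0 ▸ hqdvd)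
    have h3 : 2 ^ r - (2 ^ r - 1) = 1 := by omega
    rw [h3] at h2
    omega
  have hq3 : 3 ≤ q := by
    have := hq.two_le
    omega
  haveI : Fact q.Prime := ⟨hq⟩
  have h2ne : (2 : ZMod q) ≠ 0 := by
    intro h0
    have h1 : ((2:ℕ) : ZMod q) = 0 := by exact_mod_cast h0
    have h2 := (ZMod.natCast_eq_zero_iff 2 q).mp h1
    exact hq2 ((Nat.prime_dvd_prime_iff_eq hq Nat.prime_two).mp h2)
  have hpow : (2 : ZMod q) ^ r = 1 := by
    have h1 : ((2 ^ r - 1 : ℕ) : ZMod q) = 0 := (ZMod.natCast_eq_zero_iff _ _).mpr hqdvd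
    rw [Nat.cast_sub h1le] at h1
    push_cast at h1
    rwa [sub_eq_zero] at h1
  have hord : orderOf (2 : ZMod q) = r := by
    have h1 : orderOf (2 : ZMod q) ∣ r := orderOf_dvd_of_pow_eq_one hpow
    rcases (Nat.dvd_prime hr).mp h1 with h | h
    · exfalso
      rw [orderOf_eq_one_iff] at h
      have h2' : ((1:ℕ) : ZMod q) = 0 := by
        have hs : (2 : ZMod q) - 1 = 0 := by rw [h]; ring
        have : (1 : ZMod q) = 0 := by
          have : (2 : ZMod q) - 1 = 1 := by ring
          rw [this] at hs; exact hs
        simpa using this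
      have h3 := (ZMod.natCast_eq_zero_iff 1 q).mp h2'
      have := Nat.le_of_dvd one_pos h3
      omega
    · exact h
  have hrdvd : r ∣ q - 1 := by
    rw [← hord]
    exact orderOf_dvd_of_pow_eq_one (ZMod.pow_card_sub_one_eq_one h2ne)
  have h2dvd : 2 ∣ q - 1 := by
    obtain ⟨c, hc⟩ := hq.odd_of_ne_two hq2
    omega
  have h2r : 2 * r ∣ q - 1 := Nat.Coprime.mul_dvd_of_dvd_of_dvd
    ((Nat.coprime_primes Nat.prime_two hr).mpr (by omega)) h2dvd hrdvd
  have hq2r : 2 * r + 1 ≤ q := by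
    have h1 : 2 * r ≤ q - 1 := Nat.le_of_dvd (by omega) h2r
    omega
  obtain ⟨k, hk1, hk2⟩ := exists_pow2 (r - 1) (by omega)
  set n := 2 ^ k * q with hn
  have h2k1 : 1 ≤ 2 ^ k := Nat.one_le_two_pow
  have hnpos : 0 < n := by positivity
  have hrk : r ≤ 2 ^ k + 1 := by omega
  have hpp : PPractical 2 n := ppractical_two k q r hq (by omega) hqdvd hrk
  refine ⟨n, ?_, hnpos, hpp, ?_⟩
  · have hqn : q ≤ n := Nat.le_mul_of_pos_left q (by positivity)
    omega
  · haveI : NeZero q := ⟨by omega⟩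
    obtain ⟨z, hz⟩ := IsCyclic.exists_generator (α := (ZMod q)ˣ)
    have hzord : orderOf z = q - 1 := by
      rw [orderOf_eq_card_of_forall_mem_zpowers hz, Nat.card_eq_fintype_card, ZMod.card_units]
    obtain ⟨ℓ, hℓgt, hℓp, hℓmod⟩ :=
      Nat.forall_exists_prime_gt_and_eq_mod (q := q) (a := (z : ZMod q)) z.isUnit 2
    have hℓord : orderOf ((ℓ : ℕ) : ZMod q) = q - 1 := by
      rw [hℓmod, orderOf_units, hzord]
    intro hL
    have hm_le : 2 ^ k + 1 ≤ n := by
      have h1 : 2 ^ k * 3 ≤ 2 ^ k * q := Nat.mul_le_mul_left _ hq3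
      have h2 : 2 ^ k * 3 = 3 * 2 ^ k := by ring
      omega
    obtain ⟨g, hg, hdeg⟩ := hL ℓ hℓp (2 ^ k + 1) (by omega) hm_le
    refine key hℓp (n := n) (m := 2 ^ k + 1) (D := 2 ^ k) hnpos ?_ (by omega) ?_ (by omega)
      ⟨g, hg, hdeg⟩
    · intro hdvd
      rcases (Nat.Prime.dvd_mul hℓp).mp hdvd with h | h
      · have h1 := hℓp.dvd_of_dvd_pow h
        have h2 := (Nat.prime_dvd_prime_iff_eq hℓp Nat.prime_two).mp h1
        omega
      · have heq := (Nat.prime_dvd_prime_iff_eq hℓp hq).mp h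
        have h0 : ((ℓ:ℕ) : ZMod q) = 0 := by rw [heq]; exact ZMod.natCast_self q
        rw [hℓmod] at h0
        exact z.ne_zero h0
    · intro d hd1 hd2
      have hqnd : ¬ q ∣ ℓ ^ d - 1 := by
        intro hqd
        have h1 : ((ℓ ^ d - 1 : ℕ) : ZMod q) = 0 :=
          (ZMod.natCast_eq_zero_iff _ _).mpr hqd
        have hl1 : (1:ℕ) ≤ ℓ ^ d := Nat.one_le_pow _ _ hℓp.pos
        rw [Nat.cast_sub hl1] at h1
        push_cast at h1
        rw [sub_eq_zero] at h1
        have h2 : orderOf ((ℓ:ℕ) : ZMod q) ∣ d := orderOf_dvd_of_pow_eq_one h1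
        rw [hℓord] at h2
        have h3 : q - 1 ≤ d := Nat.le_of_dvd (by omega) h2
        omega
      have hGq : Nat.Coprime (Nat.gcd n (ℓ ^ d - 1)) q := by
        rw [Nat.coprime_comm]
        exact (Nat.Prime.coprime_iff_not_dvd hq).mpr
          (fun h => hqnd (h.trans (Nat.gcd_dvd_right _ _)))
      have hGn : Nat.gcd n (ℓ ^ d - 1) ∣ 2 ^ k * q := Nat.gcd_dvd_left _ _
      exact hGq.dvd_of_dvd_mul_right hGn

end Stmt17Helper

theorem stmt17 (p : ℕ) (hp : p.Prime) :
    {n : ℕ | 0 < n ∧ PPractical p n ∧ ¬ LambdaPractical n}.Infinite := by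
  apply Stmt17Helper.infinite_of_unbounded
  intro N
  by_cases hp2 : p = 2
  · subst hp2
    obtain ⟨r, hrge, hr⟩ := Nat.exists_infinite_primes (N + 3)
    obtain ⟨n, hn1, hn2, hn3, hn4⟩ := Stmt17Helper.two_case r hr (by omega)
    exact ⟨n, ⟨hn2, hn3, hn4⟩, by omega⟩
  by_cases hp3 : p = 3
  · subst hp3
    refine ⟨3 ^ (N + 2), ⟨pow_pos (by norm_num) _, Stmt17Helper.ppractical_prime_pow 3 hp _,
      Stmt17Helper.not_lambda_three _ (by omega)⟩, ?_⟩
    have hlt : N < 2 ^ (N + 2) :=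
      lt_of_lt_of_le (Nat.lt_two_pow_self (n := N)) (Nat.pow_le_pow_right (by norm_num) (by omega))
    exact lt_of_lt_of_le hlt (Nat.pow_le_pow_left (by norm_num) _)
  · refine ⟨p ^ (N + 1), ⟨pow_pos hp.pos _, Stmt17Helper.ppractical_prime_pow p hp _,
      Stmt17Helper.not_lambda_odd p hp hp2 hp3 _ (by omega)⟩, ?_⟩
    have hlt : N < 2 ^ (N + 1) :=
      lt_of_lt_of_le (Nat.lt_two_pow_self (n := N)) (Nat.pow_le_pow_right (by norm_num) (by omega))
    exact lt_of_lt_of_le hlt (Nat.pow_le_pow_left hp.two_le _)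
end
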